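/- The functions F₁(m₁₂,m₂₂) = (−1)^{m₂₂} √(m₁₂+2+E(m₁₂)(p−2)) · √(m₁₂−m₂₂+1)/√(m₁₂−m₂₂+1+O(m₁₂−m₂₂)) and F₂(m₁₂,m₂₂) = √(m₂₂+1+E(m₂₂)(p−2)) · √(m₁₂−m₂₂+1)/√(m₁₂−m₂₂+1−O(m₁₂−m₂₂)) satisfy the recurrence F₁(m₁₂,m₂₂)F₂(m₁₂+1,m₂₂−1)/(√(m₁₂−m₂₂+1)√(m₁₂−m₂₂+3)) + F₁(m₁₂,m₂₂−1)F₂(m₁₂,m₂₂−1)/(m₁₂−m₂₂+2) = 0 for all integers m₁₂ ≥ m₂₂ ≥ 1. -/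

import Mathlib

/-- `E(j) = 1` if `j` is even, `0` otherwise. -/
noncomputable def Efun (j : ℤ) : ℝ := if Even j then 1 else 0

/-- `O(j) = 1` if `j` is odd, `0` otherwise. -/
noncomputable def Ofun (j : ℤ) : ℝ := if Odd j then 1 else 0

/-- The reduced matrix element `F₁`. -/
noncomputable def F1 (p : ℝ) (m12 m22 : ℤ) : ℝ :=
  (-1 : ℝ) ^ m22.toNat * Real.sqrt ((m12 : ℝ) + 2 + Efun m12 * (p - 2)) *
    Real.sqrt ((m12 : ℝ) - m22 + 1) / Real.sqrt ((m12 : ℝ) - m22 + 1 + Ofun (m12 - m22))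

/-- The reduced matrix element `F₂`. -/
noncomputable def F2 (p : ℝ) (m12 m22 : ℤ) : ℝ :=
  Real.sqrt ((m22 : ℝ) + 1 + Efun m22 * (p - 2)) *
    Real.sqrt ((m12 : ℝ) - m22 + 1) / Real.sqrt ((m12 : ℝ) - m22 + 1 - Ofun (m12 - m22))

/-- The first recurrence relation for the reduced matrix elements `F₁`, `F₂`. -/
theorem F1_F2_first_recurrence (p : ℝ) (hp : 2 ≤ p) (m12 m22 : ℤ)
    (h1 : 1 ≤ m22) (h2 : m22 ≤ m12) :
    F1 p m12 m22 * F2 p (m12 + 1) (m22 - 1) /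
        (Real.sqrt ((m12 : ℝ) - m22 + 1) * Real.sqrt ((m12 : ℝ) - m22 + 3)) +
      F1 p m12 (m22 - 1) * F2 p m12 (m22 - 1) / ((m12 : ℝ) - m22 + 2) = 0 := by
  have hm : (m22 : ℝ) ≤ m12 := by exact_mod_cast h2
  have hsgn : ((-1:ℝ)) ^ (m22 - 1).toNat = -((-1:ℝ)) ^ m22.toNat := by
    have h : m22.toNat = (m22 - 1).toNat + 1 := by omega
    rw [h, pow_succ]; ring
  have hr1 : Real.sqrt (1 + ((m12:ℝ) - m22)) ≠ 0 :=
    ne_of_gt (Real.sqrt_pos.mpr (by linarith))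
  have hr2 : Real.sqrt (2 + ((m12:ℝ) - m22)) ≠ 0 :=
    ne_of_gt (Real.sqrt_pos.mpr (by linarith))
  have hr3 : Real.sqrt (3 + ((m12:ℝ) - m22)) ≠ 0 :=
    ne_of_gt (Real.sqrt_pos.mpr (by linarith))
  have hd : (2 : ℝ) + ((m12:ℝ) - m22) ≠ 0 := by linarith
  have hsq : Real.sqrt (2 + ((m12:ℝ) - m22)) ^ 2 = 2 + ((m12:ℝ) - m22) :=
    Real.sq_sqrt (by linarith)
  unfold F1 F2 Ofun
  push_cast
  rcases Int.even_or_odd (m12 - m22) with he | ho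
  · have e1 : ¬ Odd (m12 - m22) := by rw [Int.not_odd_iff_even]; exact he
    have e2 : ¬ Odd (m12 + 1 - (m22 - 1)) := by
      rw [Int.not_odd_iff_even]; rcases he with ⟨k, hk⟩; exact ⟨k+1, by omega⟩
    have e3 : Odd (m12 - (m22 - 1)) := by rcases he with ⟨k, hk⟩; exact ⟨k, by omega⟩
    simp only [if_neg e1, if_neg e2, if_pos e3, hsgn]
    ring_nf
    ring_nf at hr1 hr2 hr3 hd hsq
    rw [hsq]
    field_simp
    ring
  · have e1 : Odd (m12 - m22) := ho
    have e2 : Odd (m12 + 1 - (m22 - 1)) := by rcases ho with ⟨k, hk⟩; exact ⟨k+1, by omega⟩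
    have e3 : ¬ Odd (m12 - (m22 - 1)) := by
      rw [Int.not_odd_iff_even]; rcases ho with ⟨k, hk⟩; exact ⟨k+1, by omega⟩
    simp only [if_pos e1, if_pos e2, if_neg e3, hsgn]
    ring_nf
    ring_nf at hr1 hr2 hr3 hd hsq
    rw [hsq]
    field_simp
    ring
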